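/- Let k be a field, A a finite-dimensional k-algebra, P a finitely generated projective left A-module, B := (End_A P)^op, and F := Hom_A(P, −), and assume condition (A1). If M is a finite-dimensional indecomposable A-module, then all composition factors of the B-module F(M) belong to the same block of B; equivalently, every central idempotent of B acts on F(M) either as zero or as the identity. -/
import Mathlib


noncomputable section

section Defs

variable (R : Type) [Ring R]

/-- `L` is (a simple module which is) a composition factor of `M`,
i.e. `L` is simple and isomorphic to a subquotient of `M`. -/
def IsCompFactor (L M : Type) [AddCommGroup L] [Module R L]
    [AddCommGroup M] [Module R M] : Prop :=
  IsSimpleModule R L ∧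
    ∃ N₁ N₂ : Submodule R M, N₁ ≤ N₂ ∧
      Nonempty ((↥N₂ ⧸ Submodule.comap N₂.subtype N₁) ≃ₗ[R] L)

/-- `M` and `N` have a common composition factor. -/
def HaveCommonCompFactor (M N : Type) [AddCommGroup M] [Module R M]
    [AddCommGroup N] [Module R N] : Prop :=
  ∃ (M₁ M₂ : Submodule R M) (N₁ N₂ : Submodule R N), M₁ ≤ M₂ ∧ N₁ ≤ N₂ ∧
    IsSimpleModule R (↥M₂ ⧸ Submodule.comap M₂.subtype M₁) ∧
    Nonempty ((↥M₂ ⧸ Submodule.comap M₂.subtype M₁) ≃ₗ[R]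
      (↥N₂ ⧸ Submodule.comap N₂.subtype N₁))

/-- Two members of a family of modules are linked if they are joined by a finite chain
of members of the family in which consecutive members have a common composition factor. -/
def Linked {Λ : Type} (Mfam : Λ → Type) [∀ l, AddCommGroup (Mfam l)]
    [∀ l, Module R (Mfam l)] (a b : Λ) : Prop :=
  Relation.ReflTransGen (fun x y => HaveCommonCompFactor R (Mfam x) (Mfam y)) a b

/-- a primitive central idempotent (block idempotent) -/
def IsBlockIdempotent (e : R) : Prop :=
  e ≠ 0 ∧ IsIdempotentElem e ∧ e ∈ Subring.center R ∧
    ∀ f g : R, IsIdempotentElem f → IsIdempotentElem g →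
      f ∈ Subring.center R → g ∈ Subring.center R →
      f * g = 0 → e = f + g → f = 0 ∨ g = 0

/-- `M` and `N` belong to the same block: some primitive central idempotent acts as the
identity on both. -/
def InSameBlock (M N : Type) [AddCommGroup M] [Module R M]
    [AddCommGroup N] [Module R N] : Prop :=
  ∃ e : R, IsBlockIdempotent R e ∧ (∀ m : M, e • m = m) ∧ (∀ x : N, e • x = x)

/-- `π : Q → L` is a projective cover: `Q` projective, `π` surjective, `ker π` superfluous. -/
def IsProjectiveCover (Q L : Type) [AddCommGroup Q] [Module R Q]
    [AddCommGroup L] [Module R L] (π : Q →ₗ[R] L) : Prop :=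
  Module.Projective R Q ∧ Function.Surjective π ∧
    ∀ N : Submodule R Q, N ⊔ LinearMap.ker π = ⊤ → N = ⊤

/-- number of factors of a composition series isomorphic to `D` -/
def factorCount {M : Type} [AddCommGroup M] [Module R M]
    (s : CompositionSeries (Submodule R M)) (D : Type) [AddCommGroup D] [Module R D] : ℕ :=
  Nat.card {i : Fin s.length //
    Nonempty ((↥(s i.succ) ⧸ Submodule.comap (s i.succ).subtype (s i.castSucc)) ≃ₗ[R] D)}

end Defs

section Cover

variable (A : Type) [Ring A] (P : Type) [AddCommGroup P] [Module A P]

/-- the module structure on `F(M) = Hom_A(P, M)` over `B = (End_A P)ᵒᵖ`, by precomposition -/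
instance endOppModule (M : Type) [AddCommGroup M] [Module A M] :
    Module (Module.End A P)ᵐᵒᵖ (P →ₗ[A] M) where
  smul b f := f ∘ₗ b.unop
  one_smul f := LinearMap.comp_id f
  mul_smul b c f := rfl
  smul_zero b := LinearMap.zero_comp _
  smul_add b f g := LinearMap.add_comp _ _ _
  add_smul b c f := LinearMap.comp_add _ _ _
  zero_smul f := LinearMap.comp_zero f

/-- The `B`-module homomorphism `F(M) → F(N)` induced by an `A`-module homomorphism
`φ : M → N`, namely postcomposition with `φ`. -/
def inducedHom {M N : Type} [AddCommGroup M] [Module A M] [AddCommGroup N] [Module A N]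
    (φ : M →ₗ[A] N) : (P →ₗ[A] M) →ₗ[(Module.End A P)ᵐᵒᵖ] (P →ₗ[A] N) where
  toFun f := φ ∘ₗ f
  map_add' f g := LinearMap.comp_add _ _ _
  map_smul' b f := rfl

/-- Condition (A1): `F = Hom_A(P, -)` is fully faithful on finitely generated
projective `A`-modules. -/
def CondA1 : Prop :=
  ∀ (M : Type) [AddCommGroup M] [Module A M] [Module.Finite A M] [Module.Projective A M]
    (N : Type) [AddCommGroup N] [Module A N] [Module.Finite A N] [Module.Projective A N],
    Function.Bijective (fun φ : M →ₗ[A] N => inducedHom A P φ)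

end Cover

section Aux

variable (A : Type) [Ring A] (P : Type) [AddCommGroup P] [Module A P]

lemma smul_hom_def {M : Type} [AddCommGroup M] [Module A M]
    (b : (Module.End A P)ᵐᵒᵖ) (f : P →ₗ[A] M) : b • f = f ∘ₗ b.unop := rfl

/-- precomposition with a central endomorphism of `P` is a `B`-linear endomorphism
of `F(M)`. -/
def precompHom (M : Type) [AddCommGroup M] [Module A M] (ε : Module.End A P)
    (hc : ∀ ψ : Module.End A P, ε * ψ = ψ * ε) :
    (P →ₗ[A] M) →ₗ[(Module.End A P)ᵐᵒᵖ] (P →ₗ[A] M) where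
  toFun f := f ∘ₗ ε
  map_add' f g := LinearMap.add_comp _ _ _
  map_smul' b f := by
    show (f ∘ₗ b.unop) ∘ₗ ε = (f ∘ₗ ε) ∘ₗ b.unop
    rw [LinearMap.comp_assoc, LinearMap.comp_assoc, ← Module.End.mul_eq_comp,
      ← Module.End.mul_eq_comp, hc]

/-- Under condition (A1), a central element of `B = (End_A P)ᵐᵒᵖ` acts on `P` as scalar
multiplication by a central element of `A`. -/
lemma exists_central_scalar [Module.Finite A P] [Module.Projective A P]
    (hA1 : CondA1 A P) (e : (Module.End A P)ᵐᵒᵖ)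
    (hec : e ∈ Subring.center ((Module.End A P)ᵐᵒᵖ)) :
    ∃ a : A, (∀ c : A, a * c = c * a) ∧ ∀ p : P, e.unop p = a • p := by
  set ε : Module.End A P := e.unop with hε
  have hc : ∀ ψ : Module.End A P, ε * ψ = ψ * ε := by
    intro ψ
    have h := Subring.mem_center_iff.mp hec (MulOpposite.op ψ)
    have h' := congrArg MulOpposite.unop h
    simpa using h'
  have hcp : ∀ (ψ : Module.End A P) (p : P), ε (ψ p) = ψ (ε p) := by
    intro ψ p
    have := congrArg (fun u : Module.End A P => u p) (hc ψ)
    simpa using this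
  -- the B-linear endomorphism of F(A)
  obtain ⟨φA, hφA⟩ := (hA1 A A).2 (precompHom A P A ε hc)
  have hφA' : ∀ f : P →ₗ[A] A, φA ∘ₗ f = f ∘ₗ ε := by
    intro f
    exact congrFun (congrArg DFunLike.coe hφA) f
  have hφA'' : ∀ (f : P →ₗ[A] A) (p : P), φA (f p) = f (ε p) := by
    intro f p
    exact congrFun (congrArg DFunLike.coe (hφA' f)) p
  refine ⟨φA 1, ?_, ?_⟩
  · -- centrality of a := φA 1 in A
    intro c
    set ψc : A →ₗ[A] A := LinearMap.toSpanSingleton A A c with hψcdef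
    have hnat : ψc ∘ₗ φA = φA ∘ₗ ψc := by
      apply (hA1 A A).1
      apply LinearMap.ext
      intro f
      show (ψc ∘ₗ φA) ∘ₗ f = (φA ∘ₗ ψc) ∘ₗ f
      apply LinearMap.ext
      intro p
      show ψc (φA (f p)) = φA (ψc (f p))
      rw [hφA'' f p]
      have : φA (ψc (f p)) = (ψc ∘ₗ f) (ε p) := hφA'' (ψc ∘ₗ f) p
      rw [this]
      rfl
    have h1 := congrFun (congrArg DFunLike.coe hnat) 1
    have hl : ψc (φA 1) = φA 1 * c := by
      show (φA 1) • c = φA 1 * c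
      rw [smul_eq_mul]
    have hr : φA (ψc 1) = c * φA 1 := by
      have : ψc 1 = c := by
        show (1 : A) • c = c
        rw [one_smul]
      rw [this]
      calc φA c = φA (c • 1) := by rw [smul_eq_mul, mul_one]
        _ = c • φA 1 := by rw [map_smul]
        _ = c * φA 1 := by rw [smul_eq_mul]
    rw [LinearMap.comp_apply, LinearMap.comp_apply] at h1
    rw [← hl, ← hr, h1]
  · -- εp = a • p
    intro p
    set ψp : A →ₗ[A] P := LinearMap.toSpanSingleton A P p with hψpdef
    have hnat : ψp ∘ₗ φA = ε ∘ₗ ψp := by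
      apply (hA1 A P).1
      apply LinearMap.ext
      intro f
      show (ψp ∘ₗ φA) ∘ₗ f = (ε ∘ₗ ψp) ∘ₗ f
      apply LinearMap.ext
      intro q
      show ψp (φA (f q)) = ε (ψp (f q))
      rw [hφA'' f q]
      exact (hcp (ψp ∘ₗ f) q).symm
    have h1 := congrFun (congrArg DFunLike.coe hnat) 1
    rw [LinearMap.comp_apply, LinearMap.comp_apply] at h1
    have : ψp 1 = p := by
      show (1 : A) • p = p
      rw [one_smul]
    rw [this] at h1
    exact h1.symm

/-- Under condition (A1), a central idempotent of `B` acts on `F(M)` as zero or as the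
identity, for `M` an indecomposable finite-length `A`-module. -/
lemma acts_zero_or_one [Module.Finite A P] [Module.Projective A P]
    (hA1 : CondA1 A P) (M : Type) [AddCommGroup M] [Module A M]
    [IsNoetherian A M] [IsArtinian A M]
    (hMind : ∀ N₁ N₂ : Submodule A M, IsCompl N₁ N₂ → N₁ = ⊥ ∨ N₂ = ⊥)
    (e : (Module.End A P)ᵐᵒᵖ) (hec : e ∈ Subring.center ((Module.End A P)ᵐᵒᵖ))
    (hei : IsIdempotentElem e) :
    (∀ f : P →ₗ[A] M, e • f = 0) ∨ (∀ f : P →ₗ[A] M, e • f = f) := by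
  obtain ⟨a, hacen, hεa⟩ := exists_central_scalar A P hA1 e hec
  -- multiplication by `a` on `M`, an A-endomorphism
  set μ : M →ₗ[A] M :=
    { toFun := fun m => a • m
      map_add' := fun m n => smul_add a m n
      map_smul' := fun c m => by
        show a • c • m = c • a • m
        rw [← mul_smul, ← mul_smul, hacen c] } with hμdef
  have hkey : ∀ (f : P →ₗ[A] M) (p : P), (e • f) p = μ (f p) := by
    intro f p
    show f (e.unop p) = a • f p
    rw [hεa p, map_smul]
  have hpow : ∀ (n : ℕ) (f : P →ₗ[A] M) (p : P), (e ^ (n + 1) • f) p = (μ ^ (n + 1)) (f p) := by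
    intro n
    induction n with
    | zero => intro f p; rw [pow_one, pow_one]; exact hkey f p
    | succ n ih =>
      intro f p
      rw [pow_succ e, mul_smul]
      rw [ih (e • f) p, hkey f p]
      rw [pow_succ μ (n + 1), Module.End.mul_apply]
  obtain ⟨N, hN⟩ := Filter.eventually_atTop.mp (μ.eventually_isCompl_ker_pow_range_pow)
  have hcompl := hN (N + 1) (Nat.le_succ N)
  rcases hMind _ _ hcompl with hker | hrange
  · -- kernel trivial: μ injective, e acts as identity
    right
    have hinjn : Function.Injective (μ ^ (N + 1)) := LinearMap.ker_eq_bot.mp hker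
    have hinj : Function.Injective μ := by
      intro x y hxy
      apply hinjn
      rw [pow_succ μ, Module.End.mul_apply, Module.End.mul_apply, hxy]
    intro f
    apply LinearMap.ext
    intro p
    have h1 : (e • f) p = μ (μ (f p)) := by
      have : e • f = e • (e • f) := by rw [← mul_smul, hei]
      rw [this, hkey (e • f) p, hkey f p]
    have h2 : (e • f) p = μ (f p) := hkey f p
    have h3 : μ (f p) = μ (μ (f p)) := h2.symm.trans h1
    have h4 : f p = μ (f p) := hinj h3
    rw [h2, ← h4]
  · -- range trivial: μ nilpotent, e acts as zero
    left
    have hzero : (μ ^ (N + 1)) = 0 := LinearMap.range_eq_bot.mp hrange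
    intro f
    apply LinearMap.ext
    intro p
    have : e ^ (N + 1) = e := hei.pow_succ_eq N
    have h1 : (e • f) p = (μ ^ (N + 1)) (f p) := by
      rw [← this, hpow N f p]
    rw [h1, hzero]
    rfl

end Aux

/-- under condition (A1), if `M` is a finite-dimensional indecomposable
`A`-module then all composition factors of the `B`-module `F(M)` belong to the same
block of `B`; equivalently, every central idempotent of `B` acts on `F(M)` either as
zero or as the identity. -/
theorem compFactors_of_image_of_indecomposable_in_same_block
    (k : Type) [Field k] (A : Type) [Ring A] [Algebra k A] [FiniteDimensional k A]
    (P : Type) [AddCommGroup P] [Module A P] [Module.Finite A P] [Module.Projective A P]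
    (hA1 : CondA1 A P)
    (M : Type) [AddCommGroup M] [Module A M] [Module.Finite A M]
    (hM0 : Nontrivial M)
    (hMind : ∀ N₁ N₂ : Submodule A M, IsCompl N₁ N₂ → N₁ = ⊥ ∨ N₂ = ⊥) :
    (∀ (D D' : Type) [AddCommGroup D] [Module ((Module.End A P)ᵐᵒᵖ) D]
        [AddCommGroup D'] [Module ((Module.End A P)ᵐᵒᵖ) D'],
      IsCompFactor ((Module.End A P)ᵐᵒᵖ) D (P →ₗ[A] M) →
      IsCompFactor ((Module.End A P)ᵐᵒᵖ) D' (P →ₗ[A] M) →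
      InSameBlock ((Module.End A P)ᵐᵒᵖ) D D') ∧
    (∀ e : (Module.End A P)ᵐᵒᵖ, e ∈ Subring.center ((Module.End A P)ᵐᵒᵖ) →
      IsIdempotentElem e →
      (∀ f : P →ₗ[A] M, e • f = 0) ∨ (∀ f : P →ₗ[A] M, e • f = f)) := by
  -- finiteness instances
  haveI : IsNoetherianRing A :=
    isNoetherian_of_tower k (inferInstance : IsNoetherian k A)
  haveI : IsArtinianRing A := IsArtinianRing.of_finite k A
  haveI : IsNoetherian A M := inferInstance
  haveI : IsArtinian A M := inferInstance
  haveI : IsArtinian A P := inferInstance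
  have key := acts_zero_or_one A P hA1 M hMind
  refine ⟨?_, key⟩
  intro D D' _ _ _ _ hD hD'
  obtain ⟨hDs, N₁, N₂, hle, ⟨g⟩⟩ := hD
  obtain ⟨hDs', N₁', N₂', hle', ⟨g'⟩⟩ := hD'
  -- F(M) is nontrivial
  haveI := hDs
  haveI : Nontrivial D := IsSimpleModule.nontrivial ((Module.End A P)ᵐᵒᵖ) D
  obtain ⟨d0, hd0⟩ := exists_ne (0 : D)
  have hq : g.symm d0 ≠ 0 := by
    intro h
    apply hd0
    have := congrArg g h
    simpa using this
  · obtain ⟨x, hxq⟩ := Submodule.Quotient.mk_surjective _ (g.symm d0)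
    have hx0 : (x : P →ₗ[A] M) ≠ 0 := by
      intro h
      apply hq
      have hx : x = 0 := Subtype.ext h
      rw [← hxq, hx, Submodule.Quotient.mk_zero]
    set f₀ : P →ₗ[A] M := (x : P →ₗ[A] M) with hf₀
    -- transfer: a central idempotent acting as identity on F(M) acts as identity on
    -- any subquotient
    have transfer : ∀ (c : (Module.End A P)ᵐᵒᵖ), (∀ f : P →ₗ[A] M, c • f = f) →
        ∀ (E : Type) (_ : AddCommGroup E) (_ : Module ((Module.End A P)ᵐᵒᵖ) E)
        (K₁ K₂ : Submodule ((Module.End A P)ᵐᵒᵖ) (P →ₗ[A] M))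
        (h : (↥K₂ ⧸ Submodule.comap K₂.subtype K₁) ≃ₗ[(Module.End A P)ᵐᵒᵖ] E)
        (d : E), c • d = d := by
      intro c hc E _ _ K₁ K₂ h d
      have hy : c • h.symm d = h.symm d := by
        obtain ⟨y, hy⟩ := Submodule.Quotient.mk_surjective _ (h.symm d)
        have hcy : c • y = y := by
          apply Subtype.ext
          show c • (y : P →ₗ[A] M) = (y : P →ₗ[A] M)
          exact hc y
        rw [← hy, ← Submodule.Quotient.mk_smul, hcy]
      calc c • d = c • h (h.symm d) := by rw [h.apply_symm_apply]
        _ = h (c • h.symm d) := by rw [map_smul]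
        _ = h (h.symm d) := by rw [hy]
        _ = d := h.apply_symm_apply d
    -- the set of central idempotents acting as the identity on F(M)
    set Z : Set ((Module.End A P)ᵐᵒᵖ) :=
      {c | c ∈ Subring.center ((Module.End A P)ᵐᵒᵖ) ∧ IsIdempotentElem c ∧
        ∀ f : P →ₗ[A] M, c • f = f} with hZ
    have h1Z : (1 : (Module.End A P)ᵐᵒᵖ) ∈ Z :=
      ⟨Subring.one_mem _, IsIdempotentElem.one, fun f => one_smul _ f⟩
    set ranges : Set (Submodule A P) :=
      {N | ∃ c ∈ Z, N = LinearMap.range (MulOpposite.unop c)} with hranges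
    have hrne : ranges.Nonempty := ⟨_, 1, h1Z, rfl⟩
    obtain ⟨N₀, ⟨c, hcZ, hN₀⟩, hmin⟩ :=
      WellFounded.has_min (wellFounded_lt (α := Submodule A P)) ranges hrne
    obtain ⟨hcc, hci, hc1⟩ := hcZ
    -- c ≠ 0
    have hcne : c ≠ 0 := by
      intro h
      apply hx0
      have := hc1 f₀
      rw [h, zero_smul] at this
      exact this.symm
    -- strict inclusion of ranges for a nontrivial orthogonal splitting
    have strict : ∀ f g : (Module.End A P)ᵐᵒᵖ, IsIdempotentElem f → IsIdempotentElem g →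
        f ∈ Subring.center ((Module.End A P)ᵐᵒᵖ) → f * g = 0 → g * f = 0 → c = f + g →
        f ≠ 0 →
        LinearMap.range (MulOpposite.unop g) < LinearMap.range (MulOpposite.unop c) := by
      intro f g hfi hgi hfc hfg hgf hcfg hfne
      set φ := MulOpposite.unop f with hφ
      set γ := MulOpposite.unop g with hγ
      set ε := MulOpposite.unop c with hεdef
      have hεeq : ε = φ + γ := by rw [hεdef, hcfg, MulOpposite.unop_add]
      have hφγ : γ * φ = 0 := by
        have := congrArg MulOpposite.unop hfg
        simpa using this
      have hγφ : φ * γ = 0 := by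
        have := congrArg MulOpposite.unop hgf
        simpa using this
      have hγγ : γ * γ = γ := by
        have := congrArg MulOpposite.unop hgi
        simpa using this
      have hφφ : φ * φ = φ := by
        have := congrArg MulOpposite.unop hfi
        simpa using this
      constructor
      · -- range γ ≤ range ε
        rintro x ⟨p, rfl⟩
        refine ⟨γ p, ?_⟩
        rw [hεeq]
        show φ (γ p) + γ (γ p) = γ p
        have h1 : φ (γ p) = 0 := by
          have := congrArg (fun u : Module.End A P => u p) hγφ
          simpa using this
        have h2 : γ (γ p) = γ p := by
          have := congrArg (fun u : Module.End A P => u p) hγγ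
          simpa using this
        rw [h1, h2, zero_add]
      · -- not range ε ≤ range γ
        intro hle2
        obtain ⟨p, hp⟩ : ∃ p, φ p ≠ 0 := by
          by_contra h
          push_neg at h
          apply hfne
          have : φ = 0 := LinearMap.ext fun p => h p
          have := congrArg MulOpposite.op this
          simpa [hφ] using this
        have hmem : φ p ∈ LinearMap.range ε := by
          refine ⟨φ p, ?_⟩
          rw [hεeq]
          show φ (φ p) + γ (φ p) = φ p
          have h1 : γ (φ p) = 0 := by
            have := congrArg (fun u : Module.End A P => u p) hφγ
            simpa using this
          have h2 : φ (φ p) = φ p := by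
            have := congrArg (fun u : Module.End A P => u p) hφφ
            simpa using this
          rw [h1, h2, add_zero]
        obtain ⟨q', hq'⟩ := hle2 hmem
        apply hp
        have : φ (γ q') = φ (φ p) := by rw [hq']
        have h1 : φ (γ q') = 0 := by
          have := congrArg (fun u : Module.End A P => u q') hγφ
          simpa using this
        have h2 : φ (φ p) = φ p := by
          have := congrArg (fun u : Module.End A P => u p) hφφ
          simpa using this
        rw [h1, h2] at this
        exact this.symm
    -- primitivity of c
    have hprim : ∀ f g : (Module.End A P)ᵐᵒᵖ, IsIdempotentElem f → IsIdempotentElem g →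
        f ∈ Subring.center ((Module.End A P)ᵐᵒᵖ) →
        g ∈ Subring.center ((Module.End A P)ᵐᵒᵖ) →
        f * g = 0 → c = f + g → f = 0 ∨ g = 0 := by
      intro f g hfi hgi hfc hgc hfg hcfg
      by_contra h
      push_neg at h
      obtain ⟨hfne, hgne⟩ := h
      have hgf : g * f = 0 := by
        rw [← Subring.mem_center_iff.mp hgc f]
        exact hfg
      have hf01 := key f hfc hfi
      have hg01 := key g hgc hgi
      have hsum : ∀ h : P →ₗ[A] M, f • h + g • h = h := by
        intro h'
        rw [← add_smul, ← hcfg, hc1 h']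
      rcases hf01 with hf0 | hf1
      · rcases hg01 with hg0 | hg1
        · -- both act as zero: contradiction with c acting as identity
          apply hx0
          have := hsum f₀
          rw [hf0 f₀, hg0 f₀, add_zero] at this
          exact this.symm
        · -- g acts as identity: g ∈ Z with strictly smaller range
          have hgZ : g ∈ Z := ⟨hgc, hgi, hg1⟩
          have hlt := strict f g hfi hgi hfc hfg hgf hcfg hfne
          rw [← hN₀] at hlt
          exact hmin _ ⟨g, hgZ, rfl⟩ hlt
      · rcases hg01 with hg0 | hg1
        · -- f acts as identity: f ∈ Z with strictly smaller range
          have hfZ : f ∈ Z := ⟨hfc, hfi, hf1⟩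
          have hcgf : c = g + f := by rw [hcfg, add_comm]
          have hlt := strict g f hgi hfi hgc hgf hfg hcgf hgne
          rw [← hN₀] at hlt
          exact hmin _ ⟨f, hfZ, rfl⟩ hlt
        · -- both act as identity: f₀ + f₀ = f₀ forces f₀ = 0
          apply hx0
          have := hsum f₀
          rw [hf1 f₀, hg1 f₀] at this
          have h : f₀ + f₀ = f₀ + 0 := by rw [add_zero]; exact this
          exact add_left_cancel h
    refine ⟨c, ⟨hcne, hci, hcc, hprim⟩, ?_, ?_⟩
    · exact fun d => transfer c hc1 D _ _ N₁ N₂ g d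
    · exact fun d => transfer c hc1 D' _ _ N₁' N₂' g' d

end
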